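/- Let R be of type E_6 and set v_2 := s_2 s_4 s_5 s_3 s_6 s_4 s_1 s_3 s_5 s_4 s_2 ∈ W. Then: (i) w_{0, S∖{α_2}} v_2(α_4) = ω_2 − (α_2 + α_3 + 2α_4 + α_5) = α_1 + α_2 + α_3 + α_4 + α_5 + α_6; (ii) for each i ∈ {3, 4, 5}, w_{0, S∖{α_2, α_i}} w_{0, S∖{α_2}} v_2(α_4) is a positive root that is not simple. -/

import Mathlib

noncomputable section

open scoped Classical

local notation "⟪" x ", " y "⟫" => @inner ℝ _ _ x y

namespace PaperFormal

variable (V : Type*) [NormedAddCommGroup V] [InnerProductSpace ℝ V] [FiniteDimensional ℝ V]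

/-- The reflection of the Euclidean space `V` in the hyperplane orthogonal to `v`,
i.e. `β ↦ β - (2⟪β,v⟫/⟪v,v⟫) v`. -/
def sref (v : V) : V ≃ₗᵢ[ℝ] V := Submodule.reflection (ℝ ∙ v)ᗮ

/-- A reduced irreducible crystallographic root system `R` in the Euclidean space `V`,
together with a fixed base of simple roots `a 1, …, a n`. -/
structure RootSystemWithBase (n : ℕ) : Type _ where
  /-- the set of roots -/
  R : Set V
  /-- the simple roots `a 1, …, a n` (values outside `{1, …, n}` are irrelevant) -/
  a : ℕ → V
  finite : R.Finite
  ne_zero : ∀ β ∈ R, β ≠ 0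
  refl_mem : ∀ α ∈ R, ∀ β ∈ R, sref V α β ∈ R
  crystallographic : ∀ α ∈ R, ∀ β ∈ R, ∃ k : ℤ, 2 * ⟪β, α⟫ / ⟪α, α⟫ = (k : ℝ)
  reduced : ∀ α ∈ R, ∀ t : ℝ, t • α ∈ R → t = 1 ∨ t = -1
  irreducible : ∀ P : Set V, (∀ x ∈ R, ∀ y ∈ R, x ∈ P → ⟪x, y⟫ ≠ 0 → y ∈ P) →
      (R ∩ P).Nonempty → R ⊆ P
  simple_mem : ∀ i ∈ Finset.Icc 1 n, a i ∈ R
  indep : LinearIndependent ℝ (fun i : (Set.Icc 1 n : Set ℕ) => a i)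
  span_top : Submodule.span ℝ (a '' Set.Icc 1 n) = ⊤
  root_combo : ∀ β ∈ R, ∃ c : ℕ → ℤ, ((∀ i, 0 ≤ c i) ∨ (∀ i, c i ≤ 0)) ∧
      β = ∑ i ∈ Finset.Icc 1 n, (c i : ℝ) • a i

namespace RootSystemWithBase

variable {V} {n : ℕ} (S : RootSystemWithBase V n)

/-- The simple reflection `s i` associated to the simple root `a i`. -/
def s (i : ℕ) : V ≃ₗᵢ[ℝ] V := sref V (S.a i)

/-- The product of the simple reflections along a list of indices
(leftmost factor acting last). -/
def prodW (l : List ℕ) : V ≃ₗᵢ[ℝ] V := (l.map S.s).prod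

/-- The parabolic subgroup `W_J` of the Weyl group generated by the simple reflections
`s i` for `i ∈ J`. -/
def WJ (J : Set ℕ) : Subgroup (V ≃ₗᵢ[ℝ] V) :=
  Subgroup.closure (S.s '' (J ∩ Set.Icc 1 n))

/-- The Weyl group `W`, generated by all simple reflections. -/
def W : Subgroup (V ≃ₗᵢ[ℝ] V) := S.WJ Set.univ

/-- The length of `w` with respect to the simple reflections indexed by `J`:
the least length of a word in these reflections expressing `w`. -/
def lenJ (J : Set ℕ) (w : V ≃ₗᵢ[ℝ] V) : ℕ :=
  sInf {k | ∃ l : List ℕ, (∀ i ∈ l, i ∈ J ∩ Set.Icc 1 n) ∧ l.length = k ∧ w = S.prodW l}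

/-- The length function `ℓ` of the Weyl group. -/
def len (w : V ≃ₗᵢ[ℝ] V) : ℕ := S.lenJ Set.univ w

/-- `w` is the longest element `w_{0,J}` of the parabolic subgroup `W_J`. -/
def IsLongest (J : Set ℕ) (w : V ≃ₗᵢ[ℝ] V) : Prop :=
  w ∈ S.WJ J ∧ ∀ x ∈ S.WJ J, S.lenJ J x ≤ S.lenJ J w

/-- `β` is a positive root (with respect to the base `a`). -/
def IsPos (β : V) : Prop :=
  β ∈ S.R ∧ ∃ c : ℕ → ℝ, (∀ i, 0 ≤ c i) ∧ β = ∑ i ∈ Finset.Icc 1 n, c i • S.a i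

/-- `β` is a negative root. -/
def IsNeg (β : V) : Prop := S.IsPos (-β)

/-- `h` is the highest root `α_0`: a root such that `h - β` is a nonnegative combination of
the simple roots for every root `β`. -/
def IsHighest (h : V) : Prop :=
  h ∈ S.R ∧ ∀ β ∈ S.R, ∃ c : ℕ → ℝ, (∀ i, 0 ≤ c i) ∧
    h - β = ∑ i ∈ Finset.Icc 1 n, c i • S.a i

/-- The root system is simply laced: all roots have the same length. -/
def SimplyLaced : Prop := ∀ α ∈ S.R, ∀ β ∈ S.R, ⟪α, α⟫ = ⟪β, β⟫

/-- `ω` is the fundamental weight `ω_r` dual to the simple root `a r`: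
`⟨ω, a j⟩ = δ_{rj}` for `1 ≤ j ≤ n`. -/
def IsFundamental (r : ℕ) (ω : V) : Prop :=
  ∀ j ∈ Finset.Icc 1 n, 2 * ⟪ω, S.a j⟫ / ⟪S.a j, S.a j⟫ = if j = r then 1 else 0

/-- A weight `ω` is minuscule: `⟨ω, β⟩ ≤ 1` for every positive root `β`. -/
def Minuscule (ω : V) : Prop := ∀ β, S.IsPos β → 2 * ⟪ω, β⟫ / ⟪β, β⟫ ≤ 1

end RootSystemWithBase

variable {V}

/-- Adjacency in the Dynkin diagram of type `E_n` (`n = 6, 7, 8`, Bourbaki labeling):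
`α_2` is the branch node attached to `α_4`; `α_1, α_3, α_4, …, α_n` form a chain. -/
def adjE (i j : ℕ) : Prop :=
  (i, j) ∈ ([(1,3),(3,4),(2,4),(4,5),(5,6),(6,7),(7,8)] : List (ℕ × ℕ)) ∨
  (j, i) ∈ ([(1,3),(3,4),(2,4),(4,5),(5,6),(6,7),(7,8)] : List (ℕ × ℕ))

/-- The element `v_2 = s_2 s_4 s_5 s_3 s_6 s_4 s_1 s_3 s_5 s_4 s_2` of the Weyl group of `E_6`. -/
def v2E6 (S : RootSystemWithBase V 6) : V ≃ₗᵢ[ℝ] V :=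
  S.prodW [2, 4, 5, 3, 6, 4, 1, 3, 5, 4, 2]

/-! ### Auxiliary development -/

set_option linter.unusedSectionVars false
set_option linter.unusedVariables false

theorem sref_apply' (v x : V) : sref V v x = x - (⟪x, v⟫ / ⟪v, v⟫ * 2) • v := by
  rw [sref, Submodule.reflection_apply]
  have h1 := Submodule.starProjection_add_starProjection_orthogonal (K := ℝ ∙ v) x
  have h2 : (ℝ ∙ v).starProjection x = (⟪v, x⟫ / (‖v‖^2 : ℝ)) • v :=
    Submodule.starProjection_singleton ℝ x
  have h3 : (ℝ ∙ v)ᗮ.starProjection x = x - (⟪v, x⟫ / (‖v‖^2 : ℝ)) • v := by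
    rw [← h2]; linear_combination (norm := module) h1
  rw [h3, real_inner_self_eq_norm_sq, real_inner_comm x v]
  match_scalars <;> ring

theorem sref_conj (u : V ≃ₗᵢ[ℝ] V) (v : V) :
    sref V (u v) = u * sref V v * u⁻¹ := by
  ext x
  have e1 : (u * sref V v * u⁻¹) x = u (sref V v (u.symm x)) := rfl
  rw [e1, sref_apply' (u v) x, sref_apply' v _]
  have e2 : ⟪u.symm x, v⟫ = ⟪x, u v⟫ := by
    rw [← u.inner_map_map (u.symm x) v]; simp
  have e3 : ⟪u v, u v⟫ = ⟪v, v⟫ := u.inner_map_map v v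
  rw [map_sub, map_smul, e2, e3]
  simp

/-- integer Gram matrix of `E₆`. -/
def gE (i j : ℕ) : ℤ :=
  if i = j then 2 else
  if (i,j) ∈ ([(1,3),(3,4),(2,4),(4,5),(5,6)] : List (ℕ × ℕ)) then -1 else
  if (j,i) ∈ ([(1,3),(3,4),(2,4),(4,5),(5,6)] : List (ℕ × ℕ)) then -1 else 0

def sing (j : ℕ) : ℕ → ℝ := fun i => if i = j then 1 else 0

namespace RootSystemWithBase

variable (S : RootSystemWithBase V 6)

/-- The linear combination of simple roots with coefficients `c`. -/
def vc (c : ℕ → ℝ) : V := ∑ i ∈ Finset.Icc 1 6, c i • S.a i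

abbrev GramE6 : Prop := ∀ i ∈ Finset.Icc 1 6, ∀ j ∈ Finset.Icc 1 6,
      ⟪S.a i, S.a j⟫ = if i = j then 2 else if adjE i j then -1 else 0

theorem gram (hE : S.GramE6) :
    ∀ i ∈ Finset.Icc 1 6, ∀ j ∈ Finset.Icc 1 6, ⟪S.a i, S.a j⟫ = (gE i j : ℝ) := by
  intro i hi j hj
  rw [hE i hi j hj]
  simp only [Finset.mem_Icc] at hi hj
  obtain ⟨hi1, hi2⟩ := hi; obtain ⟨hj1, hj2⟩ := hj
  interval_cases i <;> interval_cases j <;> norm_num [adjE, gE]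

theorem vc_expand (c : ℕ → ℝ) : S.vc c =
    c 1 • S.a 1 + c 2 • S.a 2 + c 3 • S.a 3 + c 4 • S.a 4 + c 5 • S.a 5 + c 6 • S.a 6 := by
  rw [vc, show (Finset.Icc 1 6 : Finset ℕ) = {1,2,3,4,5,6} from rfl]
  rw [Finset.sum_insert (by decide), Finset.sum_insert (by decide),
    Finset.sum_insert (by decide), Finset.sum_insert (by decide),
    Finset.sum_insert (by decide), Finset.sum_singleton]
  module

theorem sum_expand (c : ℕ → ℝ) : ∑ i ∈ Finset.Icc 1 6, c i =
    c 1 + c 2 + c 3 + c 4 + c 5 + c 6 := by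
  rw [show (Finset.Icc 1 6 : Finset ℕ) = {1,2,3,4,5,6} from rfl]
  rw [Finset.sum_insert (by decide), Finset.sum_insert (by decide),
    Finset.sum_insert (by decide), Finset.sum_insert (by decide),
    Finset.sum_insert (by decide), Finset.sum_singleton]
  ring

theorem vc_congr {c d : ℕ → ℝ} (h : ∀ i ∈ Finset.Icc 1 6, c i = d i) : S.vc c = S.vc d :=
  Finset.sum_congr rfl fun i hi => by rw [h i hi]

theorem vc_zero {c : ℕ → ℝ} (h : ∀ i ∈ Finset.Icc 1 6, c i = 0) : S.vc c = 0 :=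
  Finset.sum_eq_zero fun i hi => by rw [h i hi, zero_smul]

theorem vc_add (c d : ℕ → ℝ) : S.vc (fun i => c i + d i) = S.vc c + S.vc d := by
  rw [vc, vc, vc, ← Finset.sum_add_distrib]
  exact Finset.sum_congr rfl fun i _ => add_smul _ _ _

theorem vc_smul (r : ℝ) (c : ℕ → ℝ) : S.vc (fun i => r * c i) = r • S.vc c := by
  rw [vc, vc, Finset.smul_sum]
  exact Finset.sum_congr rfl fun i _ => mul_smul _ _ _

theorem vc_neg (c : ℕ → ℝ) : S.vc (fun i => -(c i)) = -S.vc c := by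
  have := S.vc_smul (-1) c
  simpa using this

theorem a_eq_vc {j : ℕ} (hj : j ∈ Finset.Icc 1 6) : S.a j = S.vc (sing j) := by
  rw [vc]
  have : ∀ i ∈ Finset.Icc 1 6, sing j i • S.a i = if i = j then S.a i else 0 := by
    intro i hi; by_cases h : i = j <;> simp [sing, h]
  rw [Finset.sum_congr rfl this, Finset.sum_ite_eq' (Finset.Icc 1 6) j S.a, if_pos hj]

theorem inner_vc (hE : S.GramE6) (c : ℕ → ℝ) {j : ℕ} (hj : j ∈ Finset.Icc 1 6) :
    ⟪S.vc c, S.a j⟫ = ∑ i ∈ Finset.Icc 1 6, c i * (gE i j : ℝ) := by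
  rw [vc, sum_inner]
  exact Finset.sum_congr rfl fun i hi => by
    rw [real_inner_smul_left, S.gram hE i hi j hj]

theorem vc_inj (hE : S.GramE6) {c d : ℕ → ℝ} (h : S.vc c = S.vc d) :
    ∀ i ∈ Finset.Icc 1 6, c i = d i := by
  have key : ∀ j ∈ Finset.Icc 1 6,
      ∑ i ∈ Finset.Icc 1 6, c i * (gE i j : ℝ) = ∑ i ∈ Finset.Icc 1 6, d i * (gE i j : ℝ) := by
    intro j hj; rw [← S.inner_vc hE c hj, ← S.inner_vc hE d hj, h]
  have e1 := key 1 (by decide); have e2 := key 2 (by decide)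
  have e3 := key 3 (by decide); have e4 := key 4 (by decide)
  have e5 := key 5 (by decide); have e6 := key 6 (by decide)
  rw [sum_expand, sum_expand] at e1 e2 e3 e4 e5 e6
  norm_num [gE] at e1 e2 e3 e4 e5 e6
  intro i hi
  simp only [Finset.mem_Icc] at hi
  obtain ⟨hi1, hi2⟩ := hi
  interval_cases i <;> linarith

theorem a_norm (hE : S.GramE6) {j : ℕ} (hj : j ∈ Finset.Icc 1 6) : ⟪S.a j, S.a j⟫ = 2 := by
  have := S.gram hE j hj j hj
  rw [this]; norm_num [gE]

theorem a_ne (hE : S.GramE6) {j : ℕ} (hj : j ∈ Finset.Icc 1 6) : S.a j ≠ 0 := by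
  intro h
  have := S.a_norm hE hj
  rw [h] at this; simp at this

theorem s_apply (hE : S.GramE6) {j : ℕ} (hj : j ∈ Finset.Icc 1 6) (x : V) :
    S.s j x = x - ⟪x, S.a j⟫ • S.a j := by
  rw [s, sref_apply', S.a_norm hE hj]
  norm_num

theorem vc_sub (c d : ℕ → ℝ) : S.vc (fun i => c i - d i) = S.vc c - S.vc d := by
  rw [vc, vc, vc, ← Finset.sum_sub_distrib]
  exact Finset.sum_congr rfl fun i _ => sub_smul _ _ _

theorem s_vc (hE : S.GramE6) {j : ℕ} (hj : j ∈ Finset.Icc 1 6) (c : ℕ → ℝ) :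
    S.s j (S.vc c) = S.vc (fun i =>
      c i - (∑ k ∈ Finset.Icc 1 6, c k * (gE k j : ℝ)) * sing j i) := by
  rw [S.s_apply hE hj, S.inner_vc hE c hj]
  set r := ∑ k ∈ Finset.Icc 1 6, c k * (gE k j : ℝ)
  rw [S.vc_sub c (fun i => r * sing j i), S.vc_smul r (sing j), ← S.a_eq_vc hj]

theorem prodW_nil : S.prodW [] = 1 := rfl

theorem prodW_cons (i : ℕ) (l : List ℕ) : S.prodW (i :: l) = S.s i * S.prodW l := by
  rw [prodW, prodW, List.map_cons, List.prod_cons]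

theorem prodW_cons_apply (i : ℕ) (l : List ℕ) (x : V) :
    S.prodW (i :: l) x = S.s i (S.prodW l x) := by
  rw [prodW_cons]; rfl

theorem prodW_append (l m : List ℕ) : S.prodW (l ++ m) = S.prodW l * S.prodW m := by
  rw [prodW, prodW, prodW, List.map_append, List.prod_append]

theorem s_inv (j : ℕ) : (S.s j)⁻¹ = S.s j := by
  rw [LinearIsometryEquiv.inv_def, s, sref, Submodule.reflection_symm]

theorem s_mul_self (j : ℕ) : S.s j * S.s j = 1 := by
  conv_lhs => rw [← S.s_inv j]
  exact inv_mul_cancel _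

theorem prodW_reverse (l : List ℕ) : (S.prodW l)⁻¹ = S.prodW l.reverse := by
  induction l with
  | nil => simp [prodW_nil]
  | cons i l ih =>
    rw [prodW_cons, List.reverse_cons, S.prodW_append, mul_inv_rev, ih, S.s_inv]
    congr 1

theorem mem_WJ_iff {J : Set ℕ} {w : V ≃ₗᵢ[ℝ] V} :
    w ∈ S.WJ J ↔ ∃ l : List ℕ, (∀ i ∈ l, i ∈ J ∩ Set.Icc 1 6) ∧ w = S.prodW l := by
  constructor
  · intro hw
    induction hw using Subgroup.closure_induction with
    | mem x hx =>
      obtain ⟨i, hi, rfl⟩ := hx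
      exact ⟨[i], by simpa using hi, by rw [prodW, List.map_singleton, List.prod_singleton]⟩
    | one => exact ⟨[], by simp, rfl⟩
    | mul x y hx hy ihx ihy =>
      obtain ⟨l, hl, rfl⟩ := ihx
      obtain ⟨m, hm, rfl⟩ := ihy
      refine ⟨l ++ m, ?_, (S.prodW_append l m).symm⟩
      intro i hi
      rcases List.mem_append.1 hi with h | h
      · exact hl i h
      · exact hm i h
    | inv x hx ihx =>
      obtain ⟨l, hl, rfl⟩ := ihx
      exact ⟨l.reverse, fun i hi => hl i (List.mem_reverse.1 hi), (S.prodW_reverse l)⟩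
  · rintro ⟨l, hl, rfl⟩
    induction l with
    | nil => exact one_mem _
    | cons i l ih =>
      rw [prodW_cons]
      exact mul_mem (Subgroup.subset_closure ⟨i, hl i (by simp), rfl⟩)
        (ih fun j hj => hl j (by simp [hj]))

theorem s_mem_WJ {J : Set ℕ} {j : ℕ} (hj : j ∈ J ∩ Set.Icc 1 6) : S.s j ∈ S.WJ J :=
  Subgroup.subset_closure ⟨j, hj, rfl⟩

theorem lenJ_le {J : Set ℕ} {l : List ℕ} (hl : ∀ i ∈ l, i ∈ J ∩ Set.Icc 1 6) :
    S.lenJ J (S.prodW l) ≤ l.length :=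
  Nat.sInf_le ⟨l, hl, rfl, rfl⟩

theorem lenJ_spec {J : Set ℕ} {w : V ≃ₗᵢ[ℝ] V} (hw : w ∈ S.WJ J) :
    ∃ l : List ℕ, (∀ i ∈ l, i ∈ J ∩ Set.Icc 1 6) ∧ l.length = S.lenJ J w ∧ w = S.prodW l := by
  obtain ⟨l0, hl0, rfl⟩ := S.mem_WJ_iff.1 hw
  have hne : {k | ∃ l : List ℕ, (∀ i ∈ l, i ∈ J ∩ Set.Icc 1 6) ∧ l.length = k ∧
      S.prodW l0 = S.prodW l}.Nonempty := ⟨l0.length, l0, hl0, rfl, rfl⟩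
  exact Nat.sInf_mem hne

theorem prodW_mem_R {l : List ℕ} (hl : ∀ i ∈ l, i ∈ Set.Icc 1 6) {x : V} (hx : x ∈ S.R) :
    S.prodW l x ∈ S.R := by
  induction l with
  | nil => exact hx
  | cons i l ih =>
    rw [prodW_cons_apply]
    have hi : S.a i ∈ S.R := S.simple_mem i (by
      have := hl i (by simp); rw [Set.mem_Icc] at this; rw [Finset.mem_Icc]; exact this)
    exact S.refl_mem (S.a i) hi _ (ih fun j hj => hl j (by simp [hj]))

theorem neg_mem_R {x : V} (hx : x ∈ S.R) : -x ∈ S.R := by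
  have hx0 : x ≠ 0 := S.ne_zero x hx
  have hip : ⟪x, x⟫ ≠ 0 := by
    rw [real_inner_self_eq_norm_sq]
    exact pow_ne_zero 2 (norm_ne_zero_iff.2 hx0)
  have h : sref V x x = -x := by
    rw [sref_apply', div_self hip]
    module
  have := S.refl_mem x hx x hx
  rwa [h] at this

theorem prodW_fix (hE : S.GramE6) {J : Set ℕ} {l : List ℕ}
    (hl : ∀ i ∈ l, i ∈ J ∩ Set.Icc 1 6) {x : V}
    (hx : ∀ j ∈ J ∩ Set.Icc 1 6, ⟪x, S.a j⟫ = 0) : S.prodW l x = x := by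
  induction l with
  | nil => rfl
  | cons i l ih =>
    have hi := hl i (by simp)
    rw [prodW_cons_apply, ih fun j hj => hl j (by simp [hj]),
      S.s_apply hE (by rw [Finset.mem_Icc]; exact Set.mem_Icc.1 hi.2), hx i hi]
    simp

theorem prodW_vc (hE : S.GramE6) {J : Set ℕ} {l : List ℕ}
    (hl : ∀ i ∈ l, i ∈ J ∩ Set.Icc 1 6) (c : ℕ → ℝ) :
    ∃ c' : ℕ → ℝ, (∀ i, i ∉ J ∩ Set.Icc 1 6 → c' i = c i) ∧ S.prodW l (S.vc c) = S.vc c' := by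
  induction l with
  | nil => exact ⟨c, fun _ _ => rfl, rfl⟩
  | cons i l ih =>
    obtain ⟨c', hc', heq⟩ := ih fun j hj => hl j (by simp [hj])
    have hi := hl i (by simp)
    refine ⟨fun x => c' x - (∑ k ∈ Finset.Icc 1 6, c' k * (gE k i : ℝ)) * sing i x, ?_, ?_⟩
    · intro x hx
      have hxi : x ≠ i := fun h => hx (h ▸ hi)
      simp [sing, hxi, hc' x hx]
    · rw [prodW_cons_apply, heq, S.s_vc hE (by rw [Finset.mem_Icc]; exact Set.mem_Icc.1 hi.2)]

/-- positive root of the subsystem spanned by the simple roots indexed by `J`. -/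
def PosJ (J : Set ℕ) (β : V) : Prop := β ∈ S.R ∧ ∃ c : ℕ → ℤ,
  (∀ i, 0 ≤ c i) ∧ (∀ i, i ∉ J ∩ Set.Icc 1 6 → c i = 0) ∧ β = S.vc (fun i => (c i : ℝ))

theorem posJ_a {J : Set ℕ} {j : ℕ} (hj : j ∈ J ∩ Set.Icc 1 6) : S.PosJ J (S.a j) := by
  have hj6 : j ∈ Finset.Icc 1 6 := by rw [Finset.mem_Icc]; exact Set.mem_Icc.1 hj.2
  refine ⟨S.simple_mem j hj6, fun i => if i = j then 1 else 0, ?_, ?_, ?_⟩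
  · intro i; by_cases h : i = j <;> simp [h]
  · intro i hi
    have : i ≠ j := fun h => hi (h ▸ hj)
    simp [this]
  · rw [S.a_eq_vc hj6]
    refine S.vc_congr fun i _ => ?_
    by_cases h : i = j <;> simp [sing, h]

theorem posJ_excl (hE : S.GramE6) {J : Set ℕ} {β : V} (h1 : S.PosJ J β) (h2 : S.PosJ J (-β)) :
    False := by
  obtain ⟨hβR, c, hc0, hcs, hceq⟩ := h1
  obtain ⟨_, d, hd0, hds, hdeq⟩ := h2
  have hsum : S.vc (fun i => (c i : ℝ) + (d i : ℝ)) = S.vc (fun _ => (0:ℝ)) := by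
    rw [S.vc_add, ← hceq, ← hdeq, S.vc_zero (fun _ _ => rfl)]
    abel
  have hz := S.vc_inj hE hsum
  have hβ0 : β = 0 := by
    rw [hceq]
    refine S.vc_zero fun i hi => ?_
    have := hz i hi
    have hci : (0:ℝ) ≤ (c i : ℝ) := by exact_mod_cast hc0 i
    have hdi : (0:ℝ) ≤ (d i : ℝ) := by exact_mod_cast hd0 i
    linarith
  exact S.ne_zero β hβR hβ0

theorem dichotomy (hE : S.GramE6) {J : Set ℕ} {β : V} (hβR : β ∈ S.R) {c : ℕ → ℝ}
    (hsupp : ∀ i, i ∉ J ∩ Set.Icc 1 6 → c i = 0) (he : β = S.vc c) :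
    S.PosJ J β ∨ S.PosJ J (-β) := by
  obtain ⟨d, hsign, hdeq⟩ := S.root_combo β hβR
  have hdeq' : β = S.vc (fun i => (d i : ℝ)) := hdeq
  have hcd : ∀ i ∈ Finset.Icc 1 6, c i = (d i : ℝ) := by
    intro i hi
    exact S.vc_inj hE (he ▸ hdeq') i hi
  have hIccSet : ∀ i : ℕ, i ∈ Finset.Icc 1 6 ↔ i ∈ Set.Icc 1 6 := by
    intro i; rw [Finset.mem_Icc, Set.mem_Icc]
  rcases hsign with hpos | hneg
  · left
    refine ⟨hβR, fun i => if i ∈ J ∩ Set.Icc 1 6 then d i else 0, ?_, ?_, ?_⟩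
    · intro i; by_cases h : i ∈ J ∩ Set.Icc 1 6 <;> simp [h, hpos i]
    · intro i hi; simp [hi]
    · rw [hdeq']
      refine S.vc_congr fun i hi => ?_
      by_cases h : i ∈ J ∩ Set.Icc 1 6
      · simp [h]
      · have h0 : c i = 0 := hsupp i h
        have : (d i : ℝ) = 0 := by rw [← hcd i hi]; exact h0
        simp [h, this]
  · right
    refine ⟨S.neg_mem_R hβR, fun i => if i ∈ J ∩ Set.Icc 1 6 then -(d i) else 0, ?_, ?_, ?_⟩
    · intro i; by_cases h : i ∈ J ∩ Set.Icc 1 6 <;> simp [h]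
      · linarith [hneg i]
    · intro i hi; simp [hi]
    · rw [hdeq', ← S.vc_neg]
      refine S.vc_congr fun i hi => ?_
      by_cases h : i ∈ J ∩ Set.Icc 1 6
      · simp [h]
      · have h0 : c i = 0 := hsupp i h
        have : (d i : ℝ) = 0 := by rw [← hcd i hi]; exact h0
        simp [h, this]

theorem s_perm (hE : S.GramE6) {J : Set ℕ} {j : ℕ} (hj : j ∈ J ∩ Set.Icc 1 6) {β : V}
    (hβ : S.PosJ J β) (hne : β ≠ S.a j) : S.PosJ J (S.s j β) := by
  have hj6 : j ∈ Finset.Icc 1 6 := by rw [Finset.mem_Icc]; exact Set.mem_Icc.1 hj.2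
  obtain ⟨hβR, c, hc0, hcs, hceq⟩ := hβ
  -- find a coordinate k ≠ j with positive coefficient
  have hk : ∃ k ∈ Finset.Icc 1 6, k ≠ j ∧ 0 < c k := by
    by_contra hcon
    push_neg at hcon
    have hzero : ∀ k ∈ Finset.Icc 1 6, k ≠ j → c k = 0 := by
      intro k hk hkj
      exact le_antisymm (hcon k hk hkj) (hc0 k)
    have hβa : β = (c j : ℝ) • S.a j := by
      rw [hceq, S.a_eq_vc hj6, ← S.vc_smul]
      refine S.vc_congr fun i hi => ?_
      by_cases h : i = j
      · subst h; simp [sing]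
      · rw [hzero i hi h]; simp [sing, h]
    have := S.reduced (S.a j) (S.simple_mem j hj6) (c j : ℝ) (by rw [← hβa]; exact hβR)
    rcases this with h1 | h1
    · apply hne
      rw [hβa, h1, one_smul]
    · have : (c j : ℝ) ≥ 0 := by exact_mod_cast hc0 j
      rw [h1] at this
      linarith
  obtain ⟨k, hk6, hkj, hck⟩ := hk
  have hsjR : S.s j β ∈ S.R := S.refl_mem (S.a j) (S.simple_mem j hj6) β hβR
  have hcoords : S.s j β = S.vc (fun i =>
      (c i : ℝ) - (∑ m ∈ Finset.Icc 1 6, (c m : ℝ) * (gE m j : ℝ)) * sing j i) := by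
    rw [hceq, S.s_vc hE hj6]
  set r := ∑ m ∈ Finset.Icc 1 6, (c m : ℝ) * (gE m j : ℝ) with hr
  have hsupp' : ∀ i, i ∉ J ∩ Set.Icc 1 6 → ((c i : ℝ) - r * sing j i) = 0 := by
    intro i hi
    have h1 : c i = 0 := hcs i hi
    have h2 : i ≠ j := fun h => hi (h ▸ hj)
    simp [h1, sing, h2]
  rcases S.dichotomy hE hsjR hsupp' hcoords with h | h
  · exact h
  · exfalso
    obtain ⟨_, e, he0, hes, heeq⟩ := h
    have hsum : S.vc (fun i => ((c i : ℝ) - r * sing j i) + (e i : ℝ)) =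
        S.vc (fun _ => (0:ℝ)) := by
      rw [S.vc_add, ← hcoords, ← heeq, S.vc_zero (fun _ _ => rfl)]
      abel
    have hz := S.vc_inj hE hsum k hk6
    simp only [sing, if_neg hkj, mul_zero, sub_zero] at hz
    have he0k : (0:ℝ) ≤ (e k : ℝ) := by exact_mod_cast he0 k
    have hckR : (0:ℝ) < (c k : ℝ) := by exact_mod_cast hck
    linarith

theorem deletion (hE : S.GramE6) {J : Set ℕ} :
    ∀ l : List ℕ, (∀ i ∈ l, i ∈ J ∩ Set.Icc 1 6) → ∀ t ∈ J ∩ Set.Icc 1 6,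
      S.PosJ J (-(S.prodW l (S.a t))) →
      ∃ m : List ℕ, (∀ i ∈ m, i ∈ J ∩ Set.Icc 1 6) ∧ m.length + 1 = l.length ∧
        S.prodW l * S.s t = S.prodW m := by
  intro l
  induction l with
  | nil =>
    intro _ t ht hneg
    exact absurd (S.posJ_a ht) (fun hp => S.posJ_excl hE hp (by simpa [prodW_nil] using hneg))
  | cons i l ih =>
    intro hl t ht hneg
    have hi : i ∈ J ∩ Set.Icc 1 6 := hl i (by simp)
    have hi6 : i ∈ Finset.Icc 1 6 := by rw [Finset.mem_Icc]; exact Set.mem_Icc.1 hi.2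
    have ht6 : t ∈ Finset.Icc 1 6 := by rw [Finset.mem_Icc]; exact Set.mem_Icc.1 ht.2
    have hl' : ∀ j ∈ l, j ∈ J ∩ Set.Icc 1 6 := fun j hj => hl j (by simp [hj])
    set γ : V := S.prodW l (S.a t) with hγ
    have hγR : γ ∈ S.R := S.prodW_mem_R (fun j hj => (hl' j hj).2) (S.simple_mem t ht6)
    -- γ has coordinates supported in J ∩ Icc
    obtain ⟨c', hc's, hc'eq⟩ := S.prodW_vc hE hl' (sing t)
    have hsing : S.vc (sing t) = S.a t := (S.a_eq_vc ht6).symm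
    have hγeq : γ = S.vc c' := by rw [hγ, ← hsing, hc'eq]
    have hsupp : ∀ i', i' ∉ J ∩ Set.Icc 1 6 → c' i' = 0 := by
      intro i' hi'
      rw [hc's i' hi']
      have : i' ≠ t := fun h => hi' (h ▸ ht)
      simp [sing, this]
    rcases S.dichotomy hE hγR hsupp hγeq with hpos | hneg'
    · -- γ positive: forces γ = a i and cancellation
      have hγai : γ = S.a i := by
        by_contra hneq
        have := S.s_perm hE hi hpos hneq
        apply S.posJ_excl hE this
        rw [← S.prodW_cons_apply]
        exact hneg
      have hconj : S.s i = S.prodW l * S.s t * (S.prodW l)⁻¹ := by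
        have h1 := sref_conj (S.prodW l) (S.a t)
        rw [show S.s i = sref V (S.a i) from rfl, ← hγai, hγ]
        exact h1
      refine ⟨l, hl', by simp, ?_⟩
      rw [prodW_cons, hconj]
      group
      rw [mul_assoc, S.s_mul_self, mul_one]
    · obtain ⟨m, hm, hmlen, hmeq⟩ := ih hl' t ht hneg'
      refine ⟨i :: m, ?_, by simpa using hmlen, ?_⟩
      · intro j hj
        rcases List.mem_cons.1 hj with h | h
        · exact h ▸ hi
        · exact hm j h
      · rw [prodW_cons, prodW_cons, mul_assoc, hmeq]

theorem longest_neg (hE : S.GramE6) {J : Set ℕ} {w0 : V ≃ₗᵢ[ℝ] V}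
    (hw0 : S.IsLongest J w0) {t : ℕ} (ht : t ∈ J ∩ Set.Icc 1 6) :
    S.PosJ J (-(w0 (S.a t))) := by
  have ht6 : t ∈ Finset.Icc 1 6 := by rw [Finset.mem_Icc]; exact Set.mem_Icc.1 ht.2
  obtain ⟨l0, hl0, hlen0, hw0eq⟩ := S.lenJ_spec hw0.1
  have hwR : w0 (S.a t) ∈ S.R := by
    rw [hw0eq]; exact S.prodW_mem_R (fun j hj => (hl0 j hj).2) (S.simple_mem t ht6)
  obtain ⟨c', hc's, hc'eq⟩ := S.prodW_vc hE hl0 (sing t)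
  have hγeq : w0 (S.a t) = S.vc c' := by rw [hw0eq, ← hc'eq, ← S.a_eq_vc ht6]
  have hsupp : ∀ i', i' ∉ J ∩ Set.Icc 1 6 → c' i' = 0 := by
    intro i' hi'
    rw [hc's i' hi']
    have : i' ≠ t := fun h => hi' (h ▸ ht)
    simp [sing, this]
  rcases S.dichotomy hE hwR hsupp hγeq with hpos | hneg'
  · exfalso
    -- w0 * s t is strictly longer, contradiction
    have hmem' : w0 * S.s t ∈ S.WJ J := mul_mem hw0.1 (S.s_mem_WJ ht)
    obtain ⟨m, hm, hmlen, hmeq⟩ := S.lenJ_spec hmem'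
    have hneg : S.PosJ J (-(S.prodW m (S.a t))) := by
      have : S.prodW m (S.a t) = -(w0 (S.a t)) := by
        rw [← hmeq]
        show w0 (S.s t (S.a t)) = _
        rw [S.s_apply hE ht6, S.a_norm hE ht6]
        rw [show S.a t - (2:ℝ) • S.a t = -(S.a t) by module, map_neg]
      rw [this, neg_neg]
      exact hpos
    obtain ⟨m'', hm'', hm''len, hm''eq⟩ := S.deletion hE m hm t ht hneg
    have hid : S.prodW m'' = w0 := by
      rw [← hm''eq, ← hmeq, mul_assoc, S.s_mul_self, mul_one]
    have h1 : S.lenJ J w0 ≤ m''.length := by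
      rw [← hid]; exact S.lenJ_le hm''
    have h2 : S.lenJ J (w0 * S.s t) ≤ S.lenJ J w0 := hw0.2 _ hmem'
    omega
  · exact hneg'

theorem lenJ_inv_le {J : Set ℕ} {w : V ≃ₗᵢ[ℝ] V} (hw : w ∈ S.WJ J) :
    S.lenJ J w⁻¹ ≤ S.lenJ J w := by
  obtain ⟨l, hl, hlen, hweq⟩ := S.lenJ_spec hw
  have : w⁻¹ = S.prodW l.reverse := by rw [hweq]; exact S.prodW_reverse l
  calc S.lenJ J w⁻¹ ≤ l.reverse.length := by
        rw [this]; exact S.lenJ_le fun i hi => hl i (List.mem_reverse.1 hi)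
    _ = l.length := List.length_reverse
    _ = S.lenJ J w := hlen

theorem longest_inv {J : Set ℕ} {w0 : V ≃ₗᵢ[ℝ] V} (hw0 : S.IsLongest J w0) :
    S.IsLongest J w0⁻¹ := by
  have hmem : w0⁻¹ ∈ S.WJ J := inv_mem hw0.1
  have heq : S.lenJ J w0⁻¹ = S.lenJ J w0 := by
    refine le_antisymm (S.lenJ_inv_le hw0.1) ?_
    have := S.lenJ_inv_le hmem
    rwa [inv_inv] at this
  exact ⟨hmem, fun x hx => heq ▸ hw0.2 x hx⟩

/-- The dual vector pairing to 1 with every simple root. -/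
theorem exists_dual (hE : S.GramE6) : ∃ φ : V, ∀ i ∈ Finset.Icc 1 6, ⟪S.a i, φ⟫ = 1 := by
  classical
  refine ⟨S.vc (fun i => if i = 1 then 8 else if i = 2 then 11 else if i = 3 then 15 else
    if i = 4 then 21 else if i = 5 then 15 else if i = 6 then 8 else 0), ?_⟩
  intro i hi
  rw [real_inner_comm, S.inner_vc hE _ hi, sum_expand]
  simp only [Finset.mem_Icc] at hi
  obtain ⟨hi1, hi2⟩ := hi
  interval_cases i <;> norm_num [gE]

theorem ht_ge_one (hE : S.GramE6) {φ : V} (hφ : ∀ i ∈ Finset.Icc 1 6, ⟪S.a i, φ⟫ = 1)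
    {e : ℕ → ℤ} (he0 : ∀ i, 0 ≤ e i) {β : V} (hβR : β ∈ S.R)
    (heq : β = S.vc (fun i => (e i : ℝ))) :
    ⟪β, φ⟫ = ((∑ i ∈ Finset.Icc 1 6, e i : ℤ) : ℝ) ∧ 1 ≤ ∑ i ∈ Finset.Icc 1 6, e i := by
  have h1 : ⟪β, φ⟫ = ((∑ i ∈ Finset.Icc 1 6, e i : ℤ) : ℝ) := by
    rw [heq, vc, sum_inner]
    push_cast
    exact Finset.sum_congr rfl fun i hi => by
      rw [real_inner_smul_left, hφ i hi, mul_one]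
  refine ⟨h1, ?_⟩
  by_contra hcon
  push_neg at hcon
  have hz : ∑ i ∈ Finset.Icc 1 6, e i = 0 := by
    have : 0 ≤ ∑ i ∈ Finset.Icc 1 6, e i := Finset.sum_nonneg fun i _ => he0 i
    omega
  have hall : ∀ i ∈ Finset.Icc 1 6, e i = 0 :=
    (Finset.sum_eq_zero_iff_of_nonneg fun i _ => he0 i).1 hz
  have : β = 0 := by
    rw [heq]
    exact S.vc_zero fun i hi => by rw [hall i hi]; norm_num
  exact S.ne_zero β hβR this

theorem longest_simple (hE : S.GramE6) {J : Set ℕ} {w0 : V ≃ₗᵢ[ℝ] V}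
    (hw0 : S.IsLongest J w0) {t : ℕ} (ht : t ∈ J ∩ Set.Icc 1 6) :
    ∃ k ∈ J ∩ Set.Icc 1 6, w0 (S.a t) = -(S.a k) := by
  have ht6 : t ∈ Finset.Icc 1 6 := by rw [Finset.mem_Icc]; exact Set.mem_Icc.1 ht.2
  obtain ⟨φ, hφ⟩ := S.exists_dual hE
  obtain ⟨hcR, c, hc0, hcs, hceq⟩ := S.longest_neg hE hw0 ht
  -- data for w0⁻¹ on each simple root
  have hinv := S.longest_inv hw0
  have H : ∀ k ∈ Finset.Icc 1 6, c k ≠ 0 → ∃ hk : V, (-(w0⁻¹ (S.a k)) = hk) ∧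
      ⟪hk, φ⟫ ≥ 1 ∧ (∃ m : ℤ, ⟪hk, φ⟫ = (m:ℝ)) := by
    intro k hk6 hck
    have hkJ : k ∈ J ∩ Set.Icc 1 6 := by
      by_contra h
      exact hck (hcs k h)
    obtain ⟨hkR, d, hd0, hds, hdeq⟩ := S.longest_neg hE hinv hkJ
    obtain ⟨hip, hge⟩ := S.ht_ge_one hE hφ hd0 hkR hdeq
    refine ⟨-(w0⁻¹ (S.a k)), rfl, ?_, ⟨∑ i ∈ Finset.Icc 1 6, d i, hip⟩⟩
    rw [hip]
    exact_mod_cast hge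
  -- pair a t = -w0⁻¹ (vc c) with φ
  have hat : S.a t = -(w0⁻¹ (S.vc (fun i => (c i : ℝ)))) := by
    have h1 : w0 (S.a t) = -(S.vc (fun i => (c i : ℝ))) := by
      rw [← hceq]; exact (neg_neg _).symm
    have := congrArg w0.symm h1
    rw [LinearIsometryEquiv.symm_apply_apply] at this
    rw [this, map_neg]
    rfl
  have hsum : (1:ℝ) = ∑ k ∈ Finset.Icc 1 6, (c k : ℝ) * ⟪-(w0⁻¹ (S.a k)), φ⟫ := by
    have h0 : ⟪S.a t, φ⟫ = 1 := hφ t ht6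
    rw [← h0, hat]
    rw [vc, map_sum, inner_neg_left, sum_inner, ← Finset.sum_neg_distrib]
    refine Finset.sum_congr rfl fun k hk => ?_
    rw [map_smul, real_inner_smul_left, inner_neg_left]
    ring
  -- bound each term from below
  have hterm : ∀ k ∈ Finset.Icc 1 6, (c k : ℝ) ≤ (c k : ℝ) * ⟪-(w0⁻¹ (S.a k)), φ⟫ := by
    intro k hk
    by_cases hck : c k = 0
    · simp [hck]
    · obtain ⟨hk', hkeq, hge, _⟩ := H k hk hck
      rw [hkeq]
      have hc : (0:ℝ) ≤ (c k : ℝ) := by exact_mod_cast hc0 k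
      nlinarith
  have hT1 : ((∑ k ∈ Finset.Icc 1 6, c k : ℤ) : ℝ) ≤ 1 := by
    rw [hsum]
    push_cast
    exact Finset.sum_le_sum hterm
  have hTge : 1 ≤ ∑ k ∈ Finset.Icc 1 6, c k := (S.ht_ge_one hE hφ hc0 hcR hceq).2
  have hT : ∑ k ∈ Finset.Icc 1 6, c k = 1 := by
    have : (∑ k ∈ Finset.Icc 1 6, c k : ℤ) ≤ 1 := by exact_mod_cast hT1
    omega
  -- extract the unique index with coefficient 1
  have hk0 : ∃ k0 ∈ Finset.Icc 1 6, c k0 = 1 ∧ ∀ k ∈ Finset.Icc 1 6, k ≠ k0 → c k = 0 := by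
    have hex : ∃ k0 ∈ Finset.Icc 1 6, c k0 ≠ 0 := by
      by_contra h
      push_neg at h
      rw [Finset.sum_eq_zero h] at hT
      omega
    obtain ⟨k0, hk06, hk0ne⟩ := hex
    have hrest : ∑ k ∈ (Finset.Icc 1 6).erase k0, c k = 1 - c k0 := by
      have := Finset.add_sum_erase (Finset.Icc 1 6) c hk06
      omega
    have hrest0 : 0 ≤ ∑ k ∈ (Finset.Icc 1 6).erase k0, c k :=
      Finset.sum_nonneg fun k _ => hc0 k
    have hck0 : c k0 = 1 := by
      have h1 : 1 ≤ c k0 := by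
        have := hc0 k0
        omega
      omega
    have hrestz : ∑ k ∈ (Finset.Icc 1 6).erase k0, c k = 0 := by omega
    refine ⟨k0, hk06, hck0, fun k hk hkne => ?_⟩
    exact (Finset.sum_eq_zero_iff_of_nonneg fun k _ => hc0 k).1 hrestz k
      (Finset.mem_erase.2 ⟨hkne, hk⟩)
  obtain ⟨k0, hk06, hck0, hothers⟩ := hk0
  have hk0J : k0 ∈ J ∩ Set.Icc 1 6 := by
    by_contra h
    rw [hcs k0 h] at hck0
    omega
  refine ⟨k0, hk0J, ?_⟩
  have hvca : S.vc (fun i => (c i : ℝ)) = S.a k0 := by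
    rw [S.a_eq_vc hk06]
    refine S.vc_congr fun i hi => ?_
    by_cases h : i = k0
    · subst h; rw [hck0]; simp [sing]
    · rw [hothers i hi h]; simp [sing, h]
  have : -(w0 (S.a t)) = S.a k0 := by rw [hceq, hvca]
  rw [← this, neg_neg]

end RootSystemWithBase


/-- concrete coefficient vectors -/
def cf (r1 r2 r3 r4 r5 r6 : ℝ) : ℕ → ℝ := fun i =>
  if i = 1 then r1 else if i = 2 then r2 else if i = 3 then r3 else
  if i = 4 then r4 else if i = 5 then r5 else if i = 6 then r6 else 0

def encT : Fin 5 → ℕ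
  | 0 => 1 | 1 => 3 | 2 => 4 | 3 => 5 | 4 => 6

set_option maxHeartbeats 1000000 in
theorem chain_rigid : ∀ p1 p3 p4 p5 p6 : Fin 5,
    gE (encT p1) (encT p3) = -1 → gE (encT p3) (encT p4) = -1 →
    gE (encT p4) (encT p5) = -1 → gE (encT p5) (encT p6) = -1 →
    gE (encT p1) (encT p4) = 0 → gE (encT p1) (encT p5) = 0 →
    gE (encT p1) (encT p6) = 0 → gE (encT p3) (encT p5) = 0 →
    gE (encT p3) (encT p6) = 0 → gE (encT p4) (encT p6) = 0 →
    (encT p4 = 4 ∧ ((encT p1 = 1 ∧ encT p6 = 6) ∨ (encT p1 = 6 ∧ encT p6 = 1))) := by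
  decide

namespace RootSystemWithBase

variable (S : RootSystemWithBase V 6)

theorem v2_val (hE : S.GramE6) : v2E6 S (S.a 4) = S.vc (cf 0 1 1 2 1 0) := by
  have step0 : S.s 2 (S.vc (cf 0 0 0 1 0 0)) = S.vc (cf 0 1 0 1 0 0) := by
    rw [S.s_vc hE (by decide)]
    have hsum : (∑ k ∈ Finset.Icc 1 6, (cf 0 0 0 1 0 0) k * (gE k 2 : ℝ)) = -1 := by
      rw [sum_expand]; norm_num [cf, gE]
    rw [hsum]
    refine S.vc_congr fun i hi => ?_
    simp only [Finset.mem_Icc] at hi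
    obtain ⟨hi1, hi2⟩ := hi
    interval_cases i <;> norm_num [cf, sing]
  have step1 : S.s 4 (S.vc (cf 0 1 0 1 0 0)) = S.vc (cf 0 1 0 0 0 0) := by
    rw [S.s_vc hE (by decide)]
    have hsum : (∑ k ∈ Finset.Icc 1 6, (cf 0 1 0 1 0 0) k * (gE k 4 : ℝ)) = 1 := by
      rw [sum_expand]; norm_num [cf, gE]
    rw [hsum]
    refine S.vc_congr fun i hi => ?_
    simp only [Finset.mem_Icc] at hi
    obtain ⟨hi1, hi2⟩ := hi
    interval_cases i <;> norm_num [cf, sing]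
  have step2 : S.s 5 (S.vc (cf 0 1 0 0 0 0)) = S.vc (cf 0 1 0 0 0 0) := by
    rw [S.s_vc hE (by decide)]
    have hsum : (∑ k ∈ Finset.Icc 1 6, (cf 0 1 0 0 0 0) k * (gE k 5 : ℝ)) = 0 := by
      rw [sum_expand]; norm_num [cf, gE]
    rw [hsum]
    refine S.vc_congr fun i hi => ?_
    simp only [Finset.mem_Icc] at hi
    obtain ⟨hi1, hi2⟩ := hi
    interval_cases i <;> norm_num [cf, sing]
  have step3 : S.s 3 (S.vc (cf 0 1 0 0 0 0)) = S.vc (cf 0 1 0 0 0 0) := by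
    rw [S.s_vc hE (by decide)]
    have hsum : (∑ k ∈ Finset.Icc 1 6, (cf 0 1 0 0 0 0) k * (gE k 3 : ℝ)) = 0 := by
      rw [sum_expand]; norm_num [cf, gE]
    rw [hsum]
    refine S.vc_congr fun i hi => ?_
    simp only [Finset.mem_Icc] at hi
    obtain ⟨hi1, hi2⟩ := hi
    interval_cases i <;> norm_num [cf, sing]
  have step4 : S.s 1 (S.vc (cf 0 1 0 0 0 0)) = S.vc (cf 0 1 0 0 0 0) := by
    rw [S.s_vc hE (by decide)]
    have hsum : (∑ k ∈ Finset.Icc 1 6, (cf 0 1 0 0 0 0) k * (gE k 1 : ℝ)) = 0 := by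
      rw [sum_expand]; norm_num [cf, gE]
    rw [hsum]
    refine S.vc_congr fun i hi => ?_
    simp only [Finset.mem_Icc] at hi
    obtain ⟨hi1, hi2⟩ := hi
    interval_cases i <;> norm_num [cf, sing]
  have step5 : S.s 4 (S.vc (cf 0 1 0 0 0 0)) = S.vc (cf 0 1 0 1 0 0) := by
    rw [S.s_vc hE (by decide)]
    have hsum : (∑ k ∈ Finset.Icc 1 6, (cf 0 1 0 0 0 0) k * (gE k 4 : ℝ)) = -1 := by
      rw [sum_expand]; norm_num [cf, gE]
    rw [hsum]
    refine S.vc_congr fun i hi => ?_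
    simp only [Finset.mem_Icc] at hi
    obtain ⟨hi1, hi2⟩ := hi
    interval_cases i <;> norm_num [cf, sing]
  have step6 : S.s 6 (S.vc (cf 0 1 0 1 0 0)) = S.vc (cf 0 1 0 1 0 0) := by
    rw [S.s_vc hE (by decide)]
    have hsum : (∑ k ∈ Finset.Icc 1 6, (cf 0 1 0 1 0 0) k * (gE k 6 : ℝ)) = 0 := by
      rw [sum_expand]; norm_num [cf, gE]
    rw [hsum]
    refine S.vc_congr fun i hi => ?_
    simp only [Finset.mem_Icc] at hi
    obtain ⟨hi1, hi2⟩ := hi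
    interval_cases i <;> norm_num [cf, sing]
  have step7 : S.s 3 (S.vc (cf 0 1 0 1 0 0)) = S.vc (cf 0 1 1 1 0 0) := by
    rw [S.s_vc hE (by decide)]
    have hsum : (∑ k ∈ Finset.Icc 1 6, (cf 0 1 0 1 0 0) k * (gE k 3 : ℝ)) = -1 := by
      rw [sum_expand]; norm_num [cf, gE]
    rw [hsum]
    refine S.vc_congr fun i hi => ?_
    simp only [Finset.mem_Icc] at hi
    obtain ⟨hi1, hi2⟩ := hi
    interval_cases i <;> norm_num [cf, sing]
  have step8 : S.s 5 (S.vc (cf 0 1 1 1 0 0)) = S.vc (cf 0 1 1 1 1 0) := by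
    rw [S.s_vc hE (by decide)]
    have hsum : (∑ k ∈ Finset.Icc 1 6, (cf 0 1 1 1 0 0) k * (gE k 5 : ℝ)) = -1 := by
      rw [sum_expand]; norm_num [cf, gE]
    rw [hsum]
    refine S.vc_congr fun i hi => ?_
    simp only [Finset.mem_Icc] at hi
    obtain ⟨hi1, hi2⟩ := hi
    interval_cases i <;> norm_num [cf, sing]
  have step9 : S.s 4 (S.vc (cf 0 1 1 1 1 0)) = S.vc (cf 0 1 1 2 1 0) := by
    rw [S.s_vc hE (by decide)]
    have hsum : (∑ k ∈ Finset.Icc 1 6, (cf 0 1 1 1 1 0) k * (gE k 4 : ℝ)) = -1 := by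
      rw [sum_expand]; norm_num [cf, gE]
    rw [hsum]
    refine S.vc_congr fun i hi => ?_
    simp only [Finset.mem_Icc] at hi
    obtain ⟨hi1, hi2⟩ := hi
    interval_cases i <;> norm_num [cf, sing]
  have step10 : S.s 2 (S.vc (cf 0 1 1 2 1 0)) = S.vc (cf 0 1 1 2 1 0) := by
    rw [S.s_vc hE (by decide)]
    have hsum : (∑ k ∈ Finset.Icc 1 6, (cf 0 1 1 2 1 0) k * (gE k 2 : ℝ)) = 0 := by
      rw [sum_expand]; norm_num [cf, gE]
    rw [hsum]
    refine S.vc_congr fun i hi => ?_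
    simp only [Finset.mem_Icc] at hi
    obtain ⟨hi1, hi2⟩ := hi
    interval_cases i <;> norm_num [cf, sing]
  have ha4 : S.a 4 = S.vc (cf 0 0 0 1 0 0) := by
    rw [S.a_eq_vc (show (4:ℕ) ∈ Finset.Icc 1 6 by decide)]
    refine S.vc_congr fun i hi => ?_
    simp only [Finset.mem_Icc] at hi
    obtain ⟨hi1, hi2⟩ := hi
    interval_cases i <;> norm_num [cf, sing]
  show S.prodW [2, 4, 5, 3, 6, 4, 1, 3, 5, 4, 2] (S.a 4) = _
  rw [prodW_cons_apply, prodW_cons_apply, prodW_cons_apply, prodW_cons_apply,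
    prodW_cons_apply, prodW_cons_apply, prodW_cons_apply, prodW_cons_apply,
    prodW_cons_apply, prodW_cons_apply, prodW_cons_apply]
  rw [show S.prodW [] (S.a 4) = S.a 4 from rfl]
  rw [ha4, step0, step1, step2, step3, step4, step5, step6, step7, step8, step9, step10]

theorem omega_val (hE : S.GramE6) {ω : V} (hω : S.IsFundamental 2 ω) :
    ω = S.vc (cf 1 2 2 3 2 1) := by
  have hone : ∀ j ∈ Finset.Icc 1 6, ⟪ω, S.a j⟫ = if j = 2 then 1 else 0 := by
    intro j hj
    have h := hω j hj
    rw [S.a_norm hE hj] at h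
    by_cases hj2 : j = 2
    · rw [if_pos hj2]; rw [if_pos hj2] at h; linarith
    · rw [if_neg hj2]; rw [if_neg hj2] at h; linarith
  have hvcone : ∀ j ∈ Finset.Icc 1 6, ⟪S.vc (cf 1 2 2 3 2 1), S.a j⟫ =
      if j = 2 then 1 else 0 := by
    intro j hj
    rw [S.inner_vc hE _ hj, sum_expand]
    simp only [Finset.mem_Icc] at hj
    obtain ⟨hj1, hj2⟩ := hj
    interval_cases j <;> norm_num [cf, gE]
  have hza : ∀ j ∈ Finset.Icc 1 6, ⟪ω - S.vc (cf 1 2 2 3 2 1), S.a j⟫ = 0 := by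
    intro j hj
    rw [inner_sub_left, hone j hj, hvcone j hj, sub_self]
  have horth : ∀ x ∈ Submodule.span ℝ (S.a '' Set.Icc 1 6),
      ⟪x, ω - S.vc (cf 1 2 2 3 2 1)⟫ = 0 := by
    intro x hx
    induction hx using Submodule.span_induction with
    | mem x hx =>
      obtain ⟨i, hi, rfl⟩ := hx
      rw [real_inner_comm]
      exact hza i (by rw [Finset.mem_Icc]; exact Set.mem_Icc.1 hi)
    | zero => simp
    | add x y _ _ ihx ihy => rw [inner_add_left, ihx, ihy]; ring
    | smul r x _ ih => rw [real_inner_smul_left, ih]; ring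
  have hz : ω - S.vc (cf 1 2 2 3 2 1) = 0 := by
    have h0 : ⟪ω - S.vc (cf 1 2 2 3 2 1), ω - S.vc (cf 1 2 2 3 2 1)⟫ = 0 :=
      horth _ (by rw [S.span_top]; trivial)
    exact inner_self_eq_zero.1 h0
  rw [← sub_eq_zero]
  exact hz

theorem w0a_val (hE : S.GramE6) {w0a : V ≃ₗᵢ[ℝ] V}
    (hw0a : S.IsLongest (Set.Icc 1 6 \ {2}) w0a) :
    w0a (v2E6 S (S.a 4)) = S.vc (cf 1 1 1 1 1 1) := by
  set J : Set ℕ := Set.Icc 1 6 \ {2} with hJ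
  have hmem : ∀ k : ℕ, k ∈ Finset.Icc 1 6 → k ≠ 2 → k ∈ J ∩ Set.Icc 1 6 := by
    intro k hk hk2
    have hk' : k ∈ Set.Icc 1 6 := Set.mem_Icc.2 (Finset.mem_Icc.1 hk)
    exact ⟨⟨hk', by simp [hk2]⟩, hk'⟩
  have hmem' : ∀ k : ℕ, k ∈ J ∩ Set.Icc 1 6 → k ∈ Finset.Icc 1 6 ∧ k ≠ 2 := by
    intro k hk
    refine ⟨by rw [Finset.mem_Icc]; exact Set.mem_Icc.1 hk.2, ?_⟩
    have := hk.1.2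
    simp at this
    exact this
  obtain ⟨k1, hk1m, hk1⟩ := S.longest_simple hE hw0a (hmem 1 (by decide) (by decide))
  obtain ⟨k3, hk3m, hk3⟩ := S.longest_simple hE hw0a (hmem 3 (by decide) (by decide))
  obtain ⟨k4, hk4m, hk4⟩ := S.longest_simple hE hw0a (hmem 4 (by decide) (by decide))
  obtain ⟨k5, hk5m, hk5⟩ := S.longest_simple hE hw0a (hmem 5 (by decide) (by decide))
  obtain ⟨k6, hk6m, hk6⟩ := S.longest_simple hE hw0a (hmem 6 (by decide) (by decide))
  -- Gram matrix preservation
  have key : ∀ t t' kt kt' : ℕ, t ∈ Finset.Icc 1 6 → t' ∈ Finset.Icc 1 6 →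
      kt ∈ Finset.Icc 1 6 → kt' ∈ Finset.Icc 1 6 →
      w0a (S.a t) = -(S.a kt) → w0a (S.a t') = -(S.a kt') → gE kt kt' = gE t t' := by
    intro t t' kt kt' ht ht' hkt hkt' h h'
    have e1 : ⟪S.a kt, S.a kt'⟫ = ⟪S.a t, S.a t'⟫ := by
      have : ⟪-(S.a kt), -(S.a kt')⟫ = ⟪S.a t, S.a t'⟫ := by
        rw [← h, ← h']
        exact w0a.inner_map_map _ _
      rwa [inner_neg_neg] at this
    have e2 := S.gram hE kt hkt kt' hkt'
    have e3 := S.gram hE t ht t' ht'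
    have : (gE kt kt' : ℝ) = (gE t t' : ℝ) := by rw [← e2, ← e3, e1]
    exact_mod_cast this
  have hk1I := hmem' k1 hk1m; have hk3I := hmem' k3 hk3m; have hk4I := hmem' k4 hk4m
  have hk5I := hmem' k5 hk5m; have hk6I := hmem' k6 hk6m
  -- decode to Fin 5
  have hdec : ∀ k : ℕ, k ∈ Finset.Icc 1 6 → k ≠ 2 → ∃ p : Fin 5, encT p = k := by
    intro k hk hk2
    simp only [Finset.mem_Icc] at hk
    obtain ⟨h1, h2⟩ := hk
    interval_cases k
    · exact ⟨0, rfl⟩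
    · exact absurd rfl hk2
    · exact ⟨1, rfl⟩
    · exact ⟨2, rfl⟩
    · exact ⟨3, rfl⟩
    · exact ⟨4, rfl⟩
  obtain ⟨p1, hp1⟩ := hdec k1 hk1I.1 hk1I.2
  obtain ⟨p3, hp3⟩ := hdec k3 hk3I.1 hk3I.2
  obtain ⟨p4, hp4⟩ := hdec k4 hk4I.1 hk4I.2
  obtain ⟨p5, hp5⟩ := hdec k5 hk5I.1 hk5I.2
  obtain ⟨p6, hp6⟩ := hdec k6 hk6I.1 hk6I.2
  have hrigid := chain_rigid p1 p3 p4 p5 p6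
  rw [hp1, hp3, hp4, hp5, hp6] at hrigid
  have hconc := hrigid
    (by rw [key 1 3 k1 k3 (by decide) (by decide) hk1I.1 hk3I.1 hk1 hk3]; decide)
    (by rw [key 3 4 k3 k4 (by decide) (by decide) hk3I.1 hk4I.1 hk3 hk4]; decide)
    (by rw [key 4 5 k4 k5 (by decide) (by decide) hk4I.1 hk5I.1 hk4 hk5]; decide)
    (by rw [key 5 6 k5 k6 (by decide) (by decide) hk5I.1 hk6I.1 hk5 hk6]; decide)
    (by rw [key 1 4 k1 k4 (by decide) (by decide) hk1I.1 hk4I.1 hk1 hk4]; decide)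
    (by rw [key 1 5 k1 k5 (by decide) (by decide) hk1I.1 hk5I.1 hk1 hk5]; decide)
    (by rw [key 1 6 k1 k6 (by decide) (by decide) hk1I.1 hk6I.1 hk1 hk6]; decide)
    (by rw [key 3 5 k3 k5 (by decide) (by decide) hk3I.1 hk5I.1 hk3 hk5]; decide)
    (by rw [key 3 6 k3 k6 (by decide) (by decide) hk3I.1 hk6I.1 hk3 hk6]; decide)
    (by rw [key 4 6 k4 k6 (by decide) (by decide) hk4I.1 hk6I.1 hk4 hk6]; decide)
  obtain ⟨hk44, hk16⟩ := hconc
  -- w0a fixes the fundamental weight vector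
  have hfix : w0a (S.vc (cf 1 2 2 3 2 1)) = S.vc (cf 1 2 2 3 2 1) := by
    obtain ⟨l, hl, hw0eq⟩ := S.mem_WJ_iff.1 hw0a.1
    rw [hw0eq]
    refine S.prodW_fix hE hl ?_
    intro j hj
    obtain ⟨hj6, hj2⟩ := hmem' j hj
    rw [S.inner_vc hE _ hj6, sum_expand]
    simp only [Finset.mem_Icc] at hj6
    obtain ⟨h1, h2⟩ := hj6
    interval_cases j
    · norm_num [cf, gE]
    · exact absurd rfl hj2
    · norm_num [cf, gE]
    · norm_num [cf, gE]
    · norm_num [cf, gE]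
    · norm_num [cf, gE]
  -- decompose and apply
  have hdecomp : S.vc (cf 0 1 1 2 1 0) = (1/2 : ℝ) • S.vc (cf 1 2 2 3 2 1) +
      (1/2 : ℝ) • S.a 4 - (1/2 : ℝ) • (S.a 1 + S.a 6) := by
    rw [S.vc_expand, S.vc_expand]
    norm_num [cf]
    module
  have ha16 : w0a (S.a 1 + S.a 6) = -(S.a 1 + S.a 6) := by
    rw [map_add, hk1, hk6]
    rcases hk16 with ⟨h1, h6⟩ | ⟨h1, h6⟩
    · rw [h1, h6]; abel
    · rw [h1, h6]; abel
  have ha4 : w0a (S.a 4) = -(S.a 4) := by rw [hk4, hk44]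
  rw [S.v2_val hE, hdecomp, map_sub, map_add, map_smul, map_smul, map_smul,
    hfix, ha16, ha4]
  rw [S.vc_expand, S.vc_expand]
  norm_num [cf]
  module

theorem part_two (hE : S.GramE6) {θ : V} (hθR : θ ∈ S.R)
    (hθ : θ = S.vc (cf 1 1 1 1 1 1)) {i : ℕ} (hi : i = 3 ∨ i = 4 ∨ i = 5)
    {w0b : V ≃ₗᵢ[ℝ] V} (hw0b : w0b ∈ S.WJ (Set.Icc 1 6 \ {2, i})) :
    S.IsPos (w0b θ) ∧ ¬ ∃ j ∈ Finset.Icc 1 6, w0b θ = S.a j := by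
  obtain ⟨l, hl, hw0eq⟩ := S.mem_WJ_iff.1 hw0b
  have hi6 : i ∈ Finset.Icc 1 6 := by rcases hi with h | h | h <;> subst h <;> decide
  have hi2 : i ≠ 2 := by rcases hi with h | h | h <;> subst h <;> decide
  obtain ⟨c', hc's, hc'eq⟩ := S.prodW_vc hE hl (cf 1 1 1 1 1 1)
  have hval : w0b θ = S.vc c' := by rw [hθ, hw0eq, hc'eq]
  have h2notin : (2:ℕ) ∉ (Set.Icc 1 6 \ {2, i} : Set ℕ) ∩ Set.Icc 1 6 := by
    intro h
    have := h.1.2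
    simp at this
  have hinotin : i ∉ (Set.Icc 1 6 \ {2, i} : Set ℕ) ∩ Set.Icc 1 6 := by
    intro h
    have := h.1.2
    simp at this
  have hc'2 : c' 2 = 1 := by rw [hc's 2 h2notin]; norm_num [cf]
  have hc'i : c' i = 1 := by
    rw [hc's i hinotin]
    rcases hi with h | h | h <;> subst h <;> norm_num [cf]
  have hR : w0b θ ∈ S.R := by
    rw [hw0eq]
    exact S.prodW_mem_R (fun j hj => (hl j hj).2) hθR
  obtain ⟨d, hsign, hdeq⟩ := S.root_combo _ hR
  have hdeq' : w0b θ = S.vc (fun k => (d k : ℝ)) := hdeq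
  have hcd : ∀ k ∈ Finset.Icc 1 6, c' k = (d k : ℝ) := S.vc_inj hE (hval ▸ hdeq')
  have hd2 : d 2 = 1 := by
    have := hcd 2 (by decide)
    rw [hc'2] at this
    exact_mod_cast this.symm
  have hdpos : ∀ k, 0 ≤ d k := by
    rcases hsign with h | h
    · exact h
    · exfalso
      have := h 2
      omega
  constructor
  · exact ⟨hR, fun k => (d k : ℝ), fun k => by change (0:ℝ) ≤ (d k : ℝ); exact_mod_cast hdpos k, hdeq⟩
  · rintro ⟨j, hj, hjeq⟩
    have haj : S.a j = S.vc (sing j) := S.a_eq_vc hj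
    have hcs : ∀ k ∈ Finset.Icc 1 6, c' k = sing j k := by
      refine S.vc_inj hE ?_
      rw [← hval, ← haj, hjeq]
    have hj2 : j = 2 := by
      by_contra h
      have := hcs 2 (by decide)
      rw [hc'2] at this
      simp [sing, Ne.symm h] at this
    subst hj2
    have := hcs i hi6
    rw [hc'i] at this
    simp [sing, hi2] at this

end RootSystemWithBase


/-- In type `E_6`, with `v_2` as above:
(i) `w_{0, S∖{α_2}} v_2(α_4) = ω_2 - (α_2 + α_3 + 2α_4 + α_5) = α_1 + α_2 + α_3 + α_4 + α_5 + α_6`;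
(ii) for each `i ∈ {3, 4, 5}`, `w_{0, S∖{α_2, α_i}} w_{0, S∖{α_2}} v_2(α_4)` is a positive
root that is not simple. -/
theorem statement11 (S : RootSystemWithBase V 6)
    (hE : ∀ i ∈ Finset.Icc 1 6, ∀ j ∈ Finset.Icc 1 6,
      ⟪S.a i, S.a j⟫ = if i = j then 2 else if adjE i j then -1 else 0)
    (ω : V) (hω : S.IsFundamental 2 ω)
    (w0a : V ≃ₗᵢ[ℝ] V) (hw0a : S.IsLongest (Set.Icc 1 6 \ {2}) w0a) :
    (w0a (v2E6 S (S.a 4)) = ω - (S.a 2 + S.a 3 + (2 : ℝ) • S.a 4 + S.a 5) ∧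
     w0a (v2E6 S (S.a 4)) = S.a 1 + S.a 2 + S.a 3 + S.a 4 + S.a 5 + S.a 6) ∧
    (∀ i ∈ ({3, 4, 5} : Set ℕ), ∀ w0b : V ≃ₗᵢ[ℝ] V,
      S.IsLongest (Set.Icc 1 6 \ {2, i}) w0b →
      S.IsPos (w0b (w0a (v2E6 S (S.a 4)))) ∧
      ¬ ∃ j ∈ Finset.Icc 1 6, w0b (w0a (v2E6 S (S.a 4))) = S.a j) := by
  have hE' : S.GramE6 := hE
  have hv2R : v2E6 S (S.a 4) ∈ S.R := by
    show S.prodW [2, 4, 5, 3, 6, 4, 1, 3, 5, 4, 2] (S.a 4) ∈ S.R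
    refine S.prodW_mem_R ?_ (S.simple_mem 4 (by decide))
    intro j hj
    fin_cases hj <;> (rw [Set.mem_Icc]; omega)
  have hmain : w0a (v2E6 S (S.a 4)) = S.vc (cf 1 1 1 1 1 1) := S.w0a_val hE' hw0a
  have hθR : w0a (v2E6 S (S.a 4)) ∈ S.R := by
    obtain ⟨l, hl, hw⟩ := S.mem_WJ_iff.1 hw0a.1
    rw [hw]
    exact S.prodW_mem_R (fun j hj => (hl j hj).2) hv2R
  refine ⟨⟨?_, ?_⟩, ?_⟩
  · rw [hmain, S.omega_val hE' hω, S.vc_expand, S.vc_expand]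
    norm_num [cf]
    module
  · rw [hmain, S.vc_expand]
    norm_num [cf]
    try module
  · intro i hi w0b hw0b
    have hi' : i = 3 ∨ i = 4 ∨ i = 5 := by simpa using hi
    exact S.part_two hE' hθR hmain hi' hw0b.1


end PaperFormal
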